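/- Let ρ be a probability measure, I and J at most countable index sets, and (f_i)_{i∈I}, (g_j)_{j∈J} nonnegative measurable functions with ρ[f_i] > 0 and ρ[g_j] > 0 for all i, j, and suppose all relevant expectations are finite. Then |ρ[Σ_{i,j} f_i g_j] / (ρ[Σ_i f_i] · ρ[Σ_j g_j]) − 1| ≤ sup_{i,j} |ρ[f_i g_j] / (ρ[f_i] ρ[g_j]) − 1|. -/
import Mathlib
set_option maxHeartbeats 1000000


open MeasureTheory

/-- Convexity lemma for ratio weak mixing: if every individual ratio
`ρ[f_i g_j]/(ρ[f_i]ρ[g_j])` is within `M` of `1`, then so is the ratio for the sums. -/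
theorem stmt0 {Ω : Type*} [MeasurableSpace Ω] (ρ : Measure Ω) [IsProbabilityMeasure ρ]
    {I J : Type*} [Countable I] [Countable J]
    (f : I → Ω → ℝ) (g : J → Ω → ℝ)
    (hf0 : ∀ i x, 0 ≤ f i x) (hg0 : ∀ j x, 0 ≤ g j x)
    (hfm : ∀ i, Measurable (f i)) (hgm : ∀ j, Measurable (g j))
    (hfpos : ∀ i, 0 < ∫ x, f i x ∂ρ) (hgpos : ∀ j, 0 < ∫ x, g j x ∂ρ)
    (F G : Ω → ℝ)
    (hF : ∀ x, HasSum (fun i => f i x) (F x)) (hG : ∀ x, HasSum (fun j => g j x) (G x))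
    (hFint : Integrable F ρ) (hGint : Integrable G ρ)
    (hFGint : Integrable (fun x => F x * G x) ρ)
    (hfg : ∀ i j, Integrable (fun x => f i x * g j x) ρ)
    (hFpos : 0 < ∫ x, F x ∂ρ) (hGpos : 0 < ∫ x, G x ∂ρ)
    (M : ℝ)
    (hM : ∀ i j,
      |(∫ x, f i x * g j x ∂ρ) / ((∫ x, f i x ∂ρ) * (∫ x, g j x ∂ρ)) - 1| ≤ M) :
    |(∫ x, F x * G x ∂ρ) / ((∫ x, F x ∂ρ) * (∫ x, G x ∂ρ)) - 1| ≤ M := by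
  -- pointwise HasSum for products over pairs
  have hprodsum : ∀ x, HasSum (fun p : I × J => f p.1 x * g p.2 x) (F x * G x) := by
    intro x
    exact (hF x).mul (hG x)
      ((hF x).summable.mul_of_nonneg (hG x).summable (fun i => hf0 i x) (fun j => hg0 j x))
  -- integrability of each f i
  have hfint : ∀ i, Integrable (f i) ρ := by
    intro i
    refine hFint.mono (hfm i).aestronglyMeasurable (ae_of_all _ fun x => ?_)
    rw [Real.norm_eq_abs, abs_of_nonneg (hf0 i x)]
    exact le_trans (le_hasSum (hF x) i fun i' _ => hf0 i' x) (le_abs_self _)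
  have hgint : ∀ j, Integrable (g j) ρ := by
    intro j
    refine hGint.mono (hgm j).aestronglyMeasurable (ae_of_all _ fun x => ?_)
    rw [Real.norm_eq_abs, abs_of_nonneg (hg0 j x)]
    exact le_trans (le_hasSum (hG x) j fun j' _ => hg0 j' x) (le_abs_self _)
  -- summability of integrals of f
  have hfsummable : Summable (fun i => ∫ x, f i x ∂ρ) := by
    apply summable_of_sum_le (c := ∫ x, F x ∂ρ) (fun i => (hfpos i).le)
    intro s
    rw [← integral_finset_sum s (fun i _ => hfint i)]
    refine integral_mono (integrable_finset_sum s (fun i _ => hfint i)) hFint fun x => ?_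
    exact sum_le_hasSum s (fun i _ => hf0 i x) (hF x)
  have hgsummable : Summable (fun j => ∫ x, g j x ∂ρ) := by
    apply summable_of_sum_le (c := ∫ x, G x ∂ρ) (fun j => (hgpos j).le)
    intro s
    rw [← integral_finset_sum s (fun j _ => hgint j)]
    refine integral_mono (integrable_finset_sum s (fun j _ => hgint j)) hGint fun x => ?_
    exact sum_le_hasSum s (fun j _ => hg0 j x) (hG x)
  -- summability of integrals of products
  have hfgnn : ∀ p : I × J, 0 ≤ ∫ x, f p.1 x * g p.2 x ∂ρ :=
    fun p => integral_nonneg fun x => mul_nonneg (hf0 p.1 x) (hg0 p.2 x)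
  have hfgbd : ∀ s : Finset (I × J),
      ∑ p ∈ s, ∫ x, f p.1 x * g p.2 x ∂ρ ≤ ∫ x, F x * G x ∂ρ := by
    intro s
    rw [← integral_finset_sum s (fun p _ => hfg p.1 p.2)]
    refine integral_mono (integrable_finset_sum s (fun p _ => hfg p.1 p.2)) hFGint fun x => ?_
    exact sum_le_hasSum s (fun p _ => mul_nonneg (hf0 p.1 x) (hg0 p.2 x)) (hprodsum x)
  have hfgsummable : Summable (fun p : I × J => ∫ x, f p.1 x * g p.2 x ∂ρ) :=
    summable_of_sum_le hfgnn hfgbd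
  -- HasSum statements for integrals
  have hFsum : HasSum (fun i => ∫ x, f i x ∂ρ) (∫ x, F x ∂ρ) := by
    have h := hasSum_integral_of_summable_integral_norm (F := fun i x => f i x) hfint
      (by simpa only [Real.norm_eq_abs, abs_of_nonneg (hf0 _ _)] using hfsummable)
    rwa [integral_congr_ae (ae_of_all _ fun x => (hF x).tsum_eq)] at h
  have hGsum : HasSum (fun j => ∫ x, g j x ∂ρ) (∫ x, G x ∂ρ) := by
    have h := hasSum_integral_of_summable_integral_norm (F := fun j x => g j x) hgint
      (by simpa only [Real.norm_eq_abs, abs_of_nonneg (hg0 _ _)] using hgsummable)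
    rwa [integral_congr_ae (ae_of_all _ fun x => (hG x).tsum_eq)] at h
  have hFGsum : HasSum (fun p : I × J => ∫ x, f p.1 x * g p.2 x ∂ρ)
      (∫ x, F x * G x ∂ρ) := by
    have h := hasSum_integral_of_summable_integral_norm
      (F := fun p : I × J => fun x => f p.1 x * g p.2 x) (fun p => hfg p.1 p.2)
      (by simpa only [Real.norm_eq_abs,
        abs_of_nonneg (mul_nonneg (hf0 _ _) (hg0 _ _))] using hfgsummable)
    rwa [integral_congr_ae (ae_of_all _ fun x => (hprodsum x).tsum_eq)] at h
  -- product of expectations as a sum over pairs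
  have hBsum : HasSum (fun p : I × J => (∫ x, f p.1 x ∂ρ) * (∫ x, g p.2 x ∂ρ))
      ((∫ x, F x ∂ρ) * (∫ x, G x ∂ρ)) :=
    hFsum.mul hGsum (hfsummable.mul_of_nonneg hgsummable
      (fun i => (hfpos i).le) (fun j => (hgpos j).le))
  set A := ∫ x, F x * G x ∂ρ
  set B := (∫ x, F x ∂ρ) * (∫ x, G x ∂ρ)
  have hBpos : 0 < B := mul_pos hFpos hGpos
  -- termwise bound
  have hterm : ∀ p : I × J,
      |(∫ x, f p.1 x * g p.2 x ∂ρ) - (∫ x, f p.1 x ∂ρ) * (∫ x, g p.2 x ∂ρ)|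
        ≤ M * ((∫ x, f p.1 x ∂ρ) * (∫ x, g p.2 x ∂ρ)) := by
    intro p
    have hb : 0 < (∫ x, f p.1 x ∂ρ) * (∫ x, g p.2 x ∂ρ) := mul_pos (hfpos p.1) (hgpos p.2)
    have h := hM p.1 p.2
    rw [div_sub_one hb.ne', abs_div, abs_of_pos hb, div_le_iff₀ hb] at h
    exact h
  -- sum up
  have hdiff : HasSum (fun p : I × J =>
      (∫ x, f p.1 x * g p.2 x ∂ρ) - (∫ x, f p.1 x ∂ρ) * (∫ x, g p.2 x ∂ρ)) (A - B) :=
    hFGsum.sub hBsum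
  have hkey : |A - B| ≤ M * B := by
    rw [← hdiff.tsum_eq]
    calc |∑' p : I × J, ((∫ x, f p.1 x * g p.2 x ∂ρ)
          - (∫ x, f p.1 x ∂ρ) * (∫ x, g p.2 x ∂ρ))|
        ≤ ∑' p : I × J, |(∫ x, f p.1 x * g p.2 x ∂ρ)
          - (∫ x, f p.1 x ∂ρ) * (∫ x, g p.2 x ∂ρ)| := by
          have h := norm_tsum_le_tsum_norm (f := fun p : I × J =>
            (∫ x, f p.1 x * g p.2 x ∂ρ) - (∫ x, f p.1 x ∂ρ) * (∫ x, g p.2 x ∂ρ))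
            (by simpa only [Real.norm_eq_abs] using hdiff.summable.abs)
          simpa only [Real.norm_eq_abs] using h
      _ ≤ ∑' p : I × J, M * ((∫ x, f p.1 x ∂ρ) * (∫ x, g p.2 x ∂ρ)) :=
          Summable.tsum_le_tsum hterm hdiff.summable.abs (hBsum.summable.mul_left M)
      _ = M * B := by rw [tsum_mul_left, hBsum.tsum_eq]
  rw [div_sub_one hBpos.ne', abs_div, abs_of_pos hBpos, div_le_iff₀ hBpos]
  exact hkey
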